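/- arXiv:2311.01068 — 3 statements merged into one kernel-verified Lean document; each statement's English description precedes it below -/
import Mathlib

section
/- Let D be a self-adjoint operator on a Hilbert space H and B a bounded operator satisfying Re ⟨Bu, u⟩ ≥ λ‖u‖² for all u in the closure of the range of D, with λ > 0. Then for every nonzero real t, the operator I + itBD (with domain D(D)) is invertible with bounded inverse, and ‖(I + itBD)^{-1}‖ is bounded uniformly in t by a constant depending only on λ and ‖B‖. -/
open scoped InnerProductSpace

/-- Comparison criterion for Cauchy sequences. -/
lemma aux_cauchy_comparison {H : Type*} [NormedAddCommGroup H] {y x : ℕ → H} (K : ℝ)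
    (hK : 0 ≤ K) (h : ∀ n m, ‖y n - y m‖ ≤ K * ‖x n - x m‖) (hx : CauchySeq x) :
    CauchySeq y := by
  rw [Metric.cauchySeq_iff] at hx ⊢
  intro ε hε
  obtain ⟨N, hN⟩ := hx (ε / (K + 1)) (by positivity)
  refine ⟨N, fun n hn m hm => ?_⟩
  have h1 := hN n hn m hm
  have h2 := h n m
  rw [dist_eq_norm] at h1 ⊢
  have h3 : K * ‖x n - x m‖ ≤ K * (ε / (K + 1)) :=
    mul_le_mul_of_nonneg_left h1.le hK
  have he : (K + 1) * (ε / (K + 1)) = ε := by field_simp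
  have hd : 0 < ε / (K + 1) := by positivity
  nlinarith

/-- If `⟪w, x⟫ = ⟪y, D x⟫` for all `x` in the domain of a self-adjoint operator `D`, then
`y` belongs to the domain of `D` and `D y = w`. -/
lemma aux_selfadjoint_mem {H : Type} [NormedAddCommGroup H] [InnerProductSpace ℂ H]
    [CompleteSpace H] (D : H →ₗ.[ℂ] H) (hd : Dense (D.domain : Set H))
    (hsa : D.adjoint = D) (y w : H)
    (hyw : ∀ x : D.domain, ⟪w, (x : H)⟫_ℂ = ⟪y, D x⟫_ℂ) :
    ∃ hy : y ∈ D.domain, D ⟨y, hy⟩ = w := by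
  have hy' : y ∈ D.adjoint.domain :=
    LinearPMap.mem_adjoint_domain_of_exists y ⟨w, hyw⟩
  have happ : D.adjoint ⟨y, hy'⟩ = w :=
    LinearPMap.adjoint_apply_eq hd ⟨y, hy'⟩ fun x => hyw x
  obtain ⟨y2, hco, heq⟩ := LinearPMap.exists_of_le (le_of_eq hsa) ⟨y, hy'⟩
  have hyH : y = (y2 : H) := hco
  refine ⟨hyH ▸ y2.2, ?_⟩
  have hco2 : (⟨y, hyH ▸ y2.2⟩ : D.domain) = y2 := Subtype.ext hyH
  rw [hco2, ← heq, happ]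

set_option maxHeartbeats 1000000 in
/-- Let `D` be a self-adjoint operator on a Hilbert space `H` and `B` a
bounded operator with `Re ⟪Bu, u⟫ ≥ λ‖u‖²` for all `u` in the closure of the range of `D`,
`λ > 0`. Then for every real `t ≠ 0` the operator `I + itBD` (domain `D(D)`) is invertible
with bounded inverse, uniformly in `t`: `‖(I + itBD)⁻¹‖ ≤ C(λ, ‖B‖)` where the constant
depends only on `λ` and `‖B‖`. -/
theorem bisectorial_resolvent_bound :
    ∃ C : ℝ → ℝ → ℝ,
      ∀ (H : Type) [NormedAddCommGroup H] [InnerProductSpace ℂ H] [CompleteSpace H]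
        (D : H →ₗ.[ℂ] H) (B : H →L[ℂ] H) (lam : ℝ), 0 < lam →
        Dense (D.domain : Set H) → D.adjoint = D →
        (∀ u ∈ closure (Set.range fun w : D.domain => D w),
          lam * ‖u‖ ^ 2 ≤ (⟪B u, u⟫_ℂ).re) →
        ∀ t : ℝ, t ≠ 0 →
          (∀ v : H, ∃! u : D.domain,
            (u : H) + ((t : ℂ) * Complex.I) • B (D u) = v) ∧
          (∀ u : D.domain,
            ‖(u : H)‖ ≤ C lam ‖B‖ *
              ‖(u : H) + ((t : ℂ) * Complex.I) • B (D u)‖) := by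
  refine ⟨fun l b => 1 + b / l, ?_⟩
  intro H _ _ _ D B lam hlam hd hsa hB t ht
  set c : ℂ := (t : ℂ) * Complex.I with hc
  have hc_norm : ‖c‖ = |t| := by
    simp [hc]
  have hc_conj : (starRingEnd ℂ) c = -c := by
    simp [hc, Complex.ext_iff]
  have hcc : c * (starRingEnd ℂ) c = ((t : ℂ)) ^ 2 := by
    rw [hc_conj]
    rw [hc]
    ring_nf
    rw [Complex.I_sq]
    ring
  have hc_ne : c ≠ 0 := by
    simp [hc, Complex.ext_iff, ht]
  have ht' : (0 : ℝ) < |t| := abs_pos.mpr ht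
  -- symmetry of D
  have hsym : ∀ x y : D.domain, ⟪D x, (y : H)⟫_ℂ = ⟪(x : H), D y⟫_ℂ := by
    have h := D.adjoint_isFormalAdjoint hd
    rw [hsa] at h
    exact fun x y => h x y
  -- realness of ⟪x, D x⟫
  have him : ∀ x : D.domain, (⟪(x : H), D x⟫_ℂ).im = 0 := by
    intro x
    have h1 : (starRingEnd ℂ) ⟪(x : H), D x⟫_ℂ = ⟪(x : H), D x⟫_ℂ := by
      rw [inner_conj_symm, hsym]
    rw [Complex.conj_eq_iff_im] at h1
    exact h1
  -- the operator I + itBD as a linear map on the domain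
  set T : D.domain →ₗ[ℂ] H :=
    { toFun := fun u => (u : H) + c • B (D u)
      map_add' := fun u v => by
        simp only [Submodule.coe_add, D.map_add, map_add, smul_add]
        abel
      map_smul' := fun a u => by
        simp only [SetLike.val_smul, D.map_smul, map_smul, RingHom.id_apply, smul_add]
        rw [smul_comm] } with hT
  have hTapp : ∀ u : D.domain, T u = (u : H) + c • B (D u) := fun u => rfl
  -- the key a priori estimate
  have key : ∀ u : D.domain, lam * (|t| * ‖D u‖) ≤ ‖T u‖ := by
    intro u
    have hacc : lam * ‖D u‖ ^ 2 ≤ (⟪B (D u), D u⟫_ℂ).re :=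
      hB (D u) (subset_closure ⟨u, rfl⟩)
    have hexp : ⟪T u, D u⟫_ℂ = ⟪(u : H), D u⟫_ℂ + (starRingEnd ℂ) c * ⟪B (D u), D u⟫_ℂ := by
      rw [hTapp, inner_add_left, inner_smul_left]
    have hmulc : c * ⟪T u, D u⟫_ℂ =
        c * ⟪(u : H), D u⟫_ℂ + ((t : ℂ)) ^ 2 * ⟪B (D u), D u⟫_ℂ := by
      rw [hexp, mul_add, ← mul_assoc, hcc]
    have hre0 : (c * ⟪(u : H), D u⟫_ℂ).re = 0 := by
      rw [Complex.mul_re, him u]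
      simp [hc]
    have hret : (((t : ℂ)) ^ 2 * ⟪B (D u), D u⟫_ℂ).re = t ^ 2 * (⟪B (D u), D u⟫_ℂ).re := by
      rw [show ((t : ℂ)) ^ 2 = ((t ^ 2 : ℝ) : ℂ) by push_cast; ring, Complex.re_ofReal_mul]
    have hlow : t ^ 2 * (lam * ‖D u‖ ^ 2) ≤ (c * ⟪T u, D u⟫_ℂ).re := by
      rw [hmulc, Complex.add_re, hre0, zero_add, hret]
      nlinarith [sq_nonneg t]
    have hup : (c * ⟪T u, D u⟫_ℂ).re ≤ |t| * (‖T u‖ * ‖D u‖) := by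
      calc (c * ⟪T u, D u⟫_ℂ).re ≤ ‖c * ⟪T u, D u⟫_ℂ‖ := Complex.re_le_norm _
        _ = ‖c‖ * ‖⟪T u, D u⟫_ℂ‖ := norm_mul _ _
        _ ≤ |t| * (‖T u‖ * ‖D u‖) := by
            rw [hc_norm]
            exact mul_le_mul_of_nonneg_left (norm_inner_le_norm _ _) (abs_nonneg t)
    have hsq : t ^ 2 = |t| * |t| := by rw [← sq_abs]; ring
    rcases eq_or_lt_of_le (norm_nonneg (D u)) with h0 | h0
    · rw [← h0]
      simpa using norm_nonneg (T u)
    · have heq2 : |t| * (lam * (|t| * ‖D u‖) * ‖D u‖) = t ^ 2 * (lam * ‖D u‖ ^ 2) := by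
        rw [hsq]; ring
      have h1 : |t| * (lam * (|t| * ‖D u‖) * ‖D u‖) ≤ |t| * (‖T u‖ * ‖D u‖) := by
        rw [heq2]; linarith
      have h2 : lam * (|t| * ‖D u‖) * ‖D u‖ ≤ ‖T u‖ * ‖D u‖ :=
        le_of_mul_le_mul_left h1 ht'
      exact le_of_mul_le_mul_right h2 h0
  -- the uniform bound
  have bound : ∀ u : D.domain, ‖(u : H)‖ ≤ (1 + ‖B‖ / lam) * ‖T u‖ := by
    intro u
    have h1 := key u
    have h2 : ‖(u : H)‖ ≤ ‖T u‖ + |t| * (‖B‖ * ‖D u‖) := by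
      have heq : (u : H) = T u - c • B (D u) := by rw [hTapp]; abel
      calc ‖(u : H)‖ = ‖T u - c • B (D u)‖ := by rw [← heq]
        _ ≤ ‖T u‖ + ‖c • B (D u)‖ := norm_sub_le _ _
        _ = ‖T u‖ + |t| * ‖B (D u)‖ := by rw [norm_smul, hc_norm]
        _ ≤ ‖T u‖ + |t| * (‖B‖ * ‖D u‖) := by
            have := B.le_opNorm (D u)
            nlinarith [abs_nonneg t]
    have h3 : |t| * (‖B‖ * ‖D u‖) = (‖B‖ / lam) * (lam * (|t| * ‖D u‖)) := by
      field_simp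
    have h4 : (‖B‖ / lam) * (lam * (|t| * ‖D u‖)) ≤ (‖B‖ / lam) * ‖T u‖ :=
      mul_le_mul_of_nonneg_left h1 (by positivity)
    nlinarith
  refine ⟨?_, fun u => bound u⟩
  -- surjectivity: range of T is closed and dense
  set R : Submodule ℂ H := LinearMap.range T with hR
  have hclosed : IsClosed (R : Set H) := by
    apply IsSeqClosed.isClosed
    intro x v hx hlim
    choose u hu using fun n => hx n
    have hxc : CauchySeq x := hlim.cauchySeq
    have hud : ∀ n m, ‖(u n : H) - (u m : H)‖ ≤ (1 + ‖B‖ / lam) * ‖x n - x m‖ := by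
      intro n m
      have := bound (u n - u m)
      rw [map_sub, hu n, hu m] at this
      simpa using this
    have hDd : ∀ n m, ‖D (u n) - D (u m)‖ ≤ (lam * |t|)⁻¹ * ‖x n - x m‖ := by
      intro n m
      have h1 := key (u n - u m)
      rw [map_sub, hu n, hu m] at h1
      have h2 : lam * (|t| * ‖D (u n) - D (u m)‖) ≤ ‖x n - x m‖ := by
        simpa [D.map_sub] using h1
      rw [le_inv_mul_iff₀ (by positivity), mul_assoc]
      exact h2
    have hcu : CauchySeq fun n => (u n : H) :=
      aux_cauchy_comparison (1 + ‖B‖ / lam) (by positivity) hud hxc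
    have hcD : CauchySeq fun n => D (u n) :=
      aux_cauchy_comparison ((lam * |t|)⁻¹) (by positivity) hDd hxc
    obtain ⟨y, hy⟩ := cauchySeq_tendsto_of_complete hcu
    obtain ⟨w, hw⟩ := cauchySeq_tendsto_of_complete hcD
    have hmem : ∃ hy' : y ∈ D.domain, D ⟨y, hy'⟩ = w := by
      apply aux_selfadjoint_mem D hd hsa
      intro z
      have l1 : Filter.Tendsto (fun n => ⟪D (u n), (z : H)⟫_ℂ) Filter.atTop
          (nhds ⟪w, (z : H)⟫_ℂ) := hw.inner tendsto_const_nhds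
      have l2 : Filter.Tendsto (fun n => ⟪(u n : H), D z⟫_ℂ) Filter.atTop
          (nhds ⟪y, D z⟫_ℂ) := hy.inner tendsto_const_nhds
      have l3 : (fun n => ⟪D (u n), (z : H)⟫_ℂ) = fun n => ⟪(u n : H), D z⟫_ℂ := by
        funext n; exact hsym (u n) z
      rw [l3] at l1
      exact tendsto_nhds_unique l1 l2
    obtain ⟨hy', hw'⟩ := hmem
    have l1 : Filter.Tendsto (fun n => (u n : H) + c • B (D (u n))) Filter.atTop
        (nhds (y + c • B w)) :=
      hy.add (((B.continuous.tendsto w).comp hw).const_smul c)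
    have l2 : (fun n => (u n : H) + c • B (D (u n))) = x := by
      funext n; rw [← hTapp, hu n]
    rw [l2] at l1
    have hvy : v = y + c • B w := tendsto_nhds_unique hlim l1
    refine ⟨⟨y, hy'⟩, ?_⟩
    rw [hTapp, hw', ← hvy]
  -- density: the orthogonal complement of the range is trivial
  have horth : Rᗮ = ⊥ := by
    rw [Submodule.eq_bot_iff]
    intro v hv
    rw [Submodule.mem_orthogonal] at hv
    have h0 : ∀ u : D.domain, ⟪(u : H), v⟫_ℂ = c * ⟪D u, ContinuousLinearMap.adjoint B v⟫_ℂ := by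
      intro u
      have h1 : ⟪T u, v⟫_ℂ = 0 := hv (T u) (LinearMap.mem_range_self T u)
      rw [hTapp, inner_add_left, inner_smul_left, hc_conj] at h1
      have h2 : ⟪B (D u), v⟫_ℂ = ⟪D u, ContinuousLinearMap.adjoint B v⟫_ℂ :=
        (ContinuousLinearMap.adjoint_inner_right B (D u) v).symm
      rw [h2] at h1
      linear_combination h1
    have hmem : ∃ hy : ContinuousLinearMap.adjoint B v ∈ D.domain,
        D ⟨ContinuousLinearMap.adjoint B v, hy⟩ = c⁻¹ • v := by
      apply aux_selfadjoint_mem D hd hsa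
      intro x
      have h1 : ⟪(x : H), c⁻¹ • v⟫_ℂ = ⟪D x, ContinuousLinearMap.adjoint B v⟫_ℂ := by
        rw [inner_smul_right, h0 x, ← mul_assoc, inv_mul_cancel₀ hc_ne, one_mul]
      calc ⟪c⁻¹ • v, (x : H)⟫_ℂ = (starRingEnd ℂ) ⟪(x : H), c⁻¹ • v⟫_ℂ :=
            (inner_conj_symm _ _).symm
        _ = (starRingEnd ℂ) ⟪D x, ContinuousLinearMap.adjoint B v⟫_ℂ := by rw [h1]
        _ = ⟪ContinuousLinearMap.adjoint B v, D x⟫_ℂ := inner_conj_symm _ _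
    obtain ⟨hy, hDy⟩ := hmem
    set y : D.domain := ⟨ContinuousLinearMap.adjoint B v, hy⟩ with hydef
    have hvD : v = D (c • y) := by
      rw [D.map_smul, hDy, smul_smul, mul_inv_cancel₀ hc_ne, one_smul]
    have hvr : v ∈ closure (Set.range fun w : D.domain => D w) :=
      subset_closure ⟨c • y, hvD.symm⟩
    have hacc := hB v hvr
    have hBvv : ⟪B v, v⟫_ℂ = ⟪v, (y : H)⟫_ℂ := by
      rw [← ContinuousLinearMap.adjoint_inner_right B v v]
    have hre : (⟪v, (y : H)⟫_ℂ).re = 0 := by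
      have e1 : ⟪v, (y : H)⟫_ℂ = (starRingEnd ℂ) c * ⟪D y, (y : H)⟫_ℂ := by
        rw [hvD, D.map_smul, inner_smul_left]
      have e2 : ⟪D y, (y : H)⟫_ℂ = ⟪(y : H), D y⟫_ℂ := hsym y y
      rw [e1, hc_conj, e2]
      simp [Complex.mul_re, him y, hc]
    rw [hBvv, hre] at hacc
    have h5 : ‖v‖ ^ 2 ≤ 0 := by nlinarith
    have h6 : ‖v‖ = 0 :=
      le_antisymm (by nlinarith [norm_nonneg v]) (norm_nonneg v)
    exact norm_eq_zero.mp h6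
  have : CompleteSpace R := hclosed.completeSpace_coe
  have hRtop : R = ⊤ := Submodule.orthogonal_eq_bot_iff.mp horth
  intro v
  have hvR : v ∈ R := by rw [hRtop]; trivial
  obtain ⟨u, hu⟩ := hvR
  refine ⟨u, (hTapp u).symm.trans hu, ?_⟩
  intro u' hu'
  have hz : T (u' - u) = 0 := by
    rw [map_sub]
    have h2 : T u' = v := (hTapp u').trans hu'
    rw [h2, hu, sub_self]
  have hb := bound (u' - u)
  rw [hz, norm_zero, mul_zero] at hb
  have : ((u' - u : D.domain) : H) = 0 := norm_le_zero_iff.mp hb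
  have : (u' - u : D.domain) = 0 := by exact_mod_cast this
  exact sub_eq_zero.mp this
end

section
/- Let A be an (n+1)×(n+1) complex matrix written in block form A = [[A_⊥⊥, A_⊥∥],[A_∥⊥, A_∥∥]] with A_⊥⊥ ∈ ℂ invertible, and define B = [[1, 0],[A_∥⊥, A_∥∥]] · [[A_⊥⊥, A_⊥∥],[0, I]]^{-1}. Then the map A ↦ B is an involution: applying it twice returns A. -/
open Matrix

variable {n : ℕ}

/-- The transform `A ↦ B` of the first-order approach: with the block decomposition
`A = [[A_⊥⊥, A_⊥∥],[A_∥⊥, A_∥∥]]` corresponding to `ℂ^{1+n} = ℂ × ℂⁿ`, set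
`B = [[1, 0],[A_∥⊥, A_∥∥]] · [[A_⊥⊥, A_⊥∥],[0, I]]⁻¹`. -/
lemma kt_aux (a : Matrix (Fin 1) (Fin 1) ℂ) (b : Matrix (Fin 1) (Fin n) ℂ)
    (c : Matrix (Fin n) (Fin 1) ℂ) (d : Matrix (Fin n) (Fin n) ℂ) (ha : IsUnit a) :
    (fromBlocks 1 0 c d) * (fromBlocks a b 0 1)⁻¹ =
      fromBlocks a⁻¹ (-(a⁻¹ * b)) (c * a⁻¹) (d - c * (a⁻¹ * b)) := by
  have : Invertible a := ha.invertible
  have h1 : Invertible (1 : Matrix (Fin n) (Fin n) ℂ) := invertibleOne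
  have hI : Invertible (fromBlocks a b 0 (1 : Matrix (Fin n) (Fin n) ℂ)) :=
    fromBlocksZero₂₁Invertible a b 1
  rw [← invOf_eq_nonsing_inv, invOf_fromBlocks_zero₂₁_eq, invOf_eq_nonsing_inv,
    invOf_one, fromBlocks_multiply]
  simp [Matrix.mul_assoc, sub_eq_add_neg]
  abel


noncomputable def katoTransform (A : Matrix (Fin 1 ⊕ Fin n) (Fin 1 ⊕ Fin n) ℂ) :
    Matrix (Fin 1 ⊕ Fin n) (Fin 1 ⊕ Fin n) ℂ :=
  fromBlocks 1 0 A.toBlocks₂₁ A.toBlocks₂₂ *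
    (fromBlocks A.toBlocks₁₁ A.toBlocks₁₂ 0 1)⁻¹

/-- If the scalar block `A_⊥⊥` is invertible, the map `A ↦ B` is an
involution: applying it twice returns `A`. -/
theorem katoTransform_involutive (A : Matrix (Fin 1 ⊕ Fin n) (Fin 1 ⊕ Fin n) ℂ)
    (hA : IsUnit A.toBlocks₁₁) :
    katoTransform (katoTransform A) = A := by

  set a := A.toBlocks₁₁ with ha
  set b := A.toBlocks₁₂ with hb
  set c := A.toBlocks₂₁ with hc
  set d := A.toBlocks₂₂ with hd
  have hdet : IsUnit a.det := by
    have : Invertible a := hA.invertible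
    exact isUnit_det_of_invertible a
  have hdet' : IsUnit a⁻¹.det := isUnit_nonsing_inv_det a hdet
  have h1 : katoTransform A = fromBlocks a⁻¹ (-(a⁻¹ * b)) (c * a⁻¹) (d - c * (a⁻¹ * b)) := by
    rw [katoTransform, ← ha, ← hb, ← hc, ← hd, kt_aux a b c d hA]
  have h2 : katoTransform (katoTransform A) =
      fromBlocks (a⁻¹)⁻¹ (-((a⁻¹)⁻¹ * -(a⁻¹ * b))) ((c * a⁻¹) * (a⁻¹)⁻¹)
        ((d - c * (a⁻¹ * b)) - (c * a⁻¹) * ((a⁻¹)⁻¹ * -(a⁻¹ * b))) := by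
    rw [katoTransform, h1]
    simp only [toBlocks_fromBlocks₁₁, toBlocks_fromBlocks₁₂, toBlocks_fromBlocks₂₁,
      toBlocks_fromBlocks₂₂]
    exact kt_aux _ _ _ _ ((isUnit_nonsing_inv_iff).mpr hA)
  rw [h2, nonsing_inv_nonsing_inv a hdet]
  have hmul : a * a⁻¹ = 1 := mul_nonsing_inv a hdet
  have hmul' : a⁻¹ * a = 1 := nonsing_inv_mul a hdet
  have e1 : -(a * -(a⁻¹ * b)) = b := by
    rw [Matrix.mul_neg, neg_neg, ← Matrix.mul_assoc, hmul, Matrix.one_mul]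
  have e2 : c * a⁻¹ * a = c := by rw [Matrix.mul_assoc, hmul', Matrix.mul_one]
  have e3 : d - c * (a⁻¹ * b) - c * a⁻¹ * (a * -(a⁻¹ * b)) = d := by
    rw [Matrix.mul_neg, ← Matrix.mul_assoc a, hmul, Matrix.one_mul, Matrix.mul_neg,
      sub_neg_eq_add, Matrix.mul_assoc]
    abel
  rw [e1, e2, e3]
  exact fromBlocks_toBlocks A
end

section
/- The dyadic Carleson embedding theorem: if μ is a nonnegative measure on ℝⁿ × (0,∞) such that μ(Q × (0, ℓ(Q))) ≤ C|Q| for every dyadic cube Q, and Sₜf(x) denotes the average of f over the dyadic cube of generation matching t containing x, then ∫∫ |Sₜf(x)|² dμ(x,t) ≤ 4C‖f‖₂² for all f ∈ L²(ℝⁿ). -/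
open MeasureTheory Set
open scoped ENNReal
noncomputable section
namespace DCE


variable {n : ℕ}

def Qd (n : ℕ) (k : ℤ) (m : Fin n → ℤ) : Set (EuclideanSpace ℝ (Fin n)) :=
  {x | ∀ i, (m i : ℝ) * (2:ℝ) ^ k ≤ x i ∧ x i < ((m i : ℝ) + 1) * (2:ℝ) ^ k}

def idx (k : ℤ) (x : EuclideanSpace ℝ (Fin n)) : Fin n → ℤ := fun i => ⌊x i / (2:ℝ) ^ k⌋

lemma two_zpow_pos (k : ℤ) : (0:ℝ) < (2:ℝ) ^ k := zpow_pos (by norm_num) k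

lemma mem_Qd_iff {k : ℤ} {m : Fin n → ℤ} {x : EuclideanSpace ℝ (Fin n)} :
    x ∈ Qd n k m ↔ idx k x = m := by
  constructor
  · intro h
    funext i
    obtain ⟨h1, h2⟩ := h i
    have hp := two_zpow_pos k
    rw [idx, Int.floor_eq_iff]
    constructor
    · rw [le_div_iff₀ hp]; linarith
    · rw [div_lt_iff₀ hp]; push_cast; linarith
  · rintro rfl i
    have hp := two_zpow_pos k
    constructor
    · rw [← le_div_iff₀ hp]; exact Int.floor_le _
    · rw [← div_lt_iff₀ hp]; push_cast; exact Int.lt_floor_add_one _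

lemma mem_Qd_idx (k : ℤ) (x : EuclideanSpace ℝ (Fin n)) : x ∈ Qd n k (idx k x) :=
  mem_Qd_iff.2 rfl

lemma Qd_disjoint {k : ℤ} {m m' : Fin n → ℤ} (h : m ≠ m') : Disjoint (Qd n k m) (Qd n k m') := by
  rw [Set.disjoint_left]
  intro x hx hx'
  exact h (mem_Qd_iff.1 hx ▸ (mem_Qd_iff.1 hx').symm ▸ rfl)




lemma Qd_eq_preimage (k : ℤ) (m : Fin n → ℤ) :
    Qd n k m = (MeasurableEquiv.toLp 2 (Fin n → ℝ)).symm ⁻¹'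
      (Set.univ.pi fun i => Set.Ico ((m i : ℝ) * (2:ℝ)^k) (((m i : ℝ) + 1) * (2:ℝ)^k)) := by
  ext x
  simp [Qd, Set.mem_pi, Set.mem_Ico]

lemma measurableSet_Qd (k : ℤ) (m : Fin n → ℤ) : MeasurableSet (Qd n k m) := by
  rw [Qd_eq_preimage]
  exact (MeasurableEquiv.toLp 2 (Fin n → ℝ)).symm.measurable
    (MeasurableSet.univ_pi fun i => measurableSet_Ico)

lemma volume_Qd (k : ℤ) (m : Fin n → ℤ) :
    volume (Qd n k m) = ENNReal.ofReal (((2:ℝ)^k) ^ n) := by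
  rw [Qd_eq_preimage,
    (EuclideanSpace.volume_preserving_symm_measurableEquiv_toLp (Fin n)).measure_preimage
      ((MeasurableSet.univ_pi fun i => measurableSet_Ico).nullMeasurableSet)]
  rw [volume_pi_pi]
  have : ∀ i : Fin n, volume (Set.Ico ((m i : ℝ) * (2:ℝ)^k) (((m i : ℝ) + 1) * (2:ℝ)^k))
      = ENNReal.ofReal ((2:ℝ)^k) := by
    intro i; rw [Real.volume_Ico]; ring_nf
  simp only [this, Finset.prod_const, Finset.card_univ, Fintype.card_fin]
  rw [← ENNReal.ofReal_pow (by positivity)]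





lemma interval_nested {k k' a b : ℤ} (hk : k ≤ k') {z : ℝ}
    (h1 : (a:ℝ) * 2^k ≤ z) (h2 : z < ((a:ℝ)+1) * 2^k)
    (h3 : (b:ℝ) * 2^k' ≤ z) (h4 : z < ((b:ℝ)+1) * 2^k') :
    ∀ y : ℝ, (a:ℝ) * 2^k ≤ y → y < ((a:ℝ)+1) * 2^k →
      (b:ℝ) * 2^k' ≤ y ∧ y < ((b:ℝ)+1) * 2^k' := by
  set e : ℕ := (k' - k).toNat with he
  have hke : k' = k + e := by
    rw [he, Int.toNat_of_nonneg (by omega)]; ring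
  set D : ℤ := 2 ^ e with hD
  have hDR : ((2:ℝ))^k' = ((D:ℝ)) * 2^k := by
    rw [hke, zpow_add₀ (by norm_num : (2:ℝ) ≠ 0)]
    push_cast [hD]
    rw [zpow_natCast]; ring
  have hp := two_zpow_pos k
  rw [hDR] at h3 h4 ⊢
  -- integer inequalities
  have key1 : (b * D : ℤ) ≤ a := by
    by_contra hcon
    push_neg at hcon
    have : (a:ℝ) + 1 ≤ (b*D : ℤ) := by exact_mod_cast hcon
    have : ((a:ℝ)+1) * 2^k ≤ ((b:ℝ)*D) * 2^k := by
      push_cast at this ⊢; nlinarith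
    linarith
  have key2 : a + 1 ≤ (b+1) * D := by
    by_contra hcon
    push_neg at hcon
    have : ((b+1)*D : ℤ) ≤ a := by omega
    have : (((b:ℝ)+1)*D) * 2^k ≤ (a:ℝ) * 2^k := by
      have : (((b+1)*D : ℤ) : ℝ) ≤ (a:ℝ) := by exact_mod_cast this
      push_cast at this ⊢; nlinarith
    push_cast at this
    nlinarith
  intro y hy1 hy2
  constructor
  · have : ((b:ℝ)*D) ≤ a := by exact_mod_cast key1
    nlinarith
  · have : ((a:ℝ)+1) ≤ ((b:ℝ)+1)*D := by exact_mod_cast key2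
    nlinarith

lemma Qd_nested {k k' : ℤ} {m m' : Fin n → ℤ} (hk : k ≤ k')
    (hne : (Qd n k m ∩ Qd n k' m').Nonempty) : Qd n k m ⊆ Qd n k' m' := by
  obtain ⟨z, hz1, hz2⟩ := hne
  intro y hy i
  exact interval_nested hk (hz1 i).1 (hz1 i).2 (hz2 i).1 (hz2 i).2 (y i) (hy i).1 (hy i).2



-- layer cake for a single number
def ind (a : ℝ≥0∞) (l : ℝ) : ℝ≥0∞ := if ENNReal.ofReal l < a then 1 else 0

lemma measurable_ind (a : ℝ≥0∞) : Measurable (ind a) := by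
  unfold ind
  apply Measurable.ite _ measurable_const measurable_const
  exact measurableSet_lt (ENNReal.measurable_ofReal) measurable_const

lemma ind_mul (a : ℝ≥0∞) (l : ℝ) (c : ℝ≥0∞) :
    ind a l * c = if ENNReal.ofReal l < a then c else 0 := by
  unfold ind; split <;> simp

lemma setOf_ind_inter (a : ℝ≥0∞) :
    (Set.Ioi (0:ℝ)) ∩ {l : ℝ | ENNReal.ofReal l < a} =
      (if a = ⊤ then Set.Ioi 0 else Set.Ioo 0 a.toReal) := by
  split_ifs with h
  · subst h; ext l; simp [ENNReal.ofReal_lt_top]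
  · ext l
    simp only [Set.mem_inter_iff, Set.mem_Ioi, Set.mem_setOf_eq, Set.mem_Ioo]
    constructor
    · rintro ⟨h1, h2⟩
      exact ⟨h1, (ENNReal.ofReal_lt_iff_lt_toReal (le_of_lt h1) h).1 h2⟩
    · rintro ⟨h1, h2⟩
      exact ⟨h1, (ENNReal.ofReal_lt_iff_lt_toReal (le_of_lt h1) h).2 h2⟩

lemma layer0 (a : ℝ≥0∞) : ∫⁻ l in Set.Ioi (0:ℝ), ind a l = a := by
  have : ∀ l : ℝ, ind a l = Set.indicator {l : ℝ | ENNReal.ofReal l < a} (fun _ => 1) l := by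
    intro l; unfold ind; simp [Set.indicator_apply, Set.mem_setOf_eq]
  simp_rw [this]
  have hms : MeasurableSet {l : ℝ | ENNReal.ofReal l < a} :=
    measurableSet_lt (ENNReal.measurable_ofReal) measurable_const
  rw [lintegral_indicator hms, Measure.restrict_restrict hms, lintegral_one]
  rw [Measure.restrict_apply MeasurableSet.univ, Set.univ_inter, Set.inter_comm, setOf_ind_inter]
  split_ifs with h
  · simp [h, Real.volume_Ioi]
  · rw [Real.volume_Ioo, sub_zero, ENNReal.ofReal_toReal h]

lemma layer1 (a : ℝ≥0∞) :
    ∫⁻ l in Set.Ioi (0:ℝ), 2 * ENNReal.ofReal l * ind a l = a ^ 2 := by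
  have hrw : ∀ l : ℝ, 2 * ENNReal.ofReal l * ind a l =
      Set.indicator {l : ℝ | ENNReal.ofReal l < a} (fun u => ENNReal.ofReal (2 * u)) l := by
    intro l
    unfold ind
    by_cases h : ENNReal.ofReal l < a
    · simp only [h, if_true, mul_one, Set.indicator_apply, Set.mem_setOf_eq, if_pos h]
      rw [ENNReal.ofReal_mul (by norm_num)]
      norm_num
    · simp [Set.indicator_apply, Set.mem_setOf_eq, h]
  simp_rw [hrw]
  have hms : MeasurableSet {l : ℝ | ENNReal.ofReal l < a} :=
    measurableSet_lt (ENNReal.measurable_ofReal) measurable_const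
  rw [lintegral_indicator hms, Measure.restrict_restrict hms, Set.inter_comm, setOf_ind_inter]
  split_ifs with h
  · -- a = ⊤ : the integral is infinite
    subst h
    have htop : (⊤:ℝ≥0∞)^2 = ⊤ := by simp
    rw [htop, eq_top_iff]
    calc (⊤:ℝ≥0∞) = ∫⁻ _ in Set.Ioi (1:ℝ), 2 := by
          rw [setLIntegral_const]
          simp [Real.volume_Ioi]
      _ ≤ ∫⁻ l in Set.Ioi (1:ℝ), ENNReal.ofReal (2 * l) := by
          apply setLIntegral_mono (by fun_prop)
          intro l hl
          simp only [Set.mem_Ioi] at hl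
          calc (2:ℝ≥0∞) = ENNReal.ofReal 2 := by norm_num
            _ ≤ ENNReal.ofReal (2*l) := ENNReal.ofReal_le_ofReal (by linarith)
      _ ≤ ∫⁻ l in Set.Ioi (0:ℝ), ENNReal.ofReal (2 * l) :=
          lintegral_mono_set (Set.Ioi_subset_Ioi (by norm_num))
  · -- a < ⊤
    set r := a.toReal with hr
    have hr0 : 0 ≤ r := ENNReal.toReal_nonneg
    rw [← ofReal_integral_eq_lintegral_ofReal]
    · have : ∫ l in Set.Ioo (0:ℝ) r, 2 * l = r ^ 2 := by
        rw [← integral_Ioc_eq_integral_Ioo, ← intervalIntegral.integral_of_le hr0]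
        rw [intervalIntegral.integral_const_mul, integral_id]
        ring
      rw [this, ← ENNReal.ofReal_toReal h, hr.symm]
      rw [ENNReal.ofReal_pow hr0]
    · apply Integrable.const_mul
      apply (intervalIntegrable_iff_integrableOn_Ioo_of_le hr0).1
      exact intervalIntegral.intervalIntegrable_id
    · filter_upwards [ae_restrict_mem measurableSet_Ioo] with l hl
      have := hl.1; positivity


variable {n : ℕ}

def lvol (n : ℕ) (k : ℤ) : ℝ≥0∞ := ENNReal.ofReal (((2:ℝ)^k)^n)

lemma lvol_pos (k : ℤ) : 0 < lvol n k := by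
  unfold lvol
  rw [ENNReal.ofReal_pos]
  positivity

lemma lvol_ne_top (k : ℤ) : lvol n k ≠ ⊤ := ENNReal.ofReal_ne_top

lemma volume_Qd' (k : ℤ) (m : Fin n → ℤ) : volume (Qd n k m) = lvol n k := volume_Qd k m

/-- the `L¹` average of `φ` on a dyadic cube, as an `ℝ≥0∞` number -/
def av (φ : EuclideanSpace ℝ (Fin n) → ℝ≥0∞) (k : ℤ) (m : Fin n → ℤ) : ℝ≥0∞ :=
  (∫⁻ y in Qd n k m, φ y) / lvol n k

lemma Qd_iUnion (k : ℤ) : (⋃ m : Fin n → ℤ, Qd n k m) = Set.univ := by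
  ext x
  simp only [Set.mem_iUnion, Set.mem_univ, iff_true]
  exact ⟨idx k x, mem_Qd_idx k x⟩

lemma Qd_pairwise (k : ℤ) : Pairwise (Function.onFun Disjoint (Qd n k ·)) :=
  fun _ _ h => Qd_disjoint h

/-- partition of the whole space into cubes of one generation -/
lemma lintegral_partition (k : ℤ) (g : EuclideanSpace ℝ (Fin n) → ℝ≥0∞) :
    ∫⁻ x, g x = ∑' m : Fin n → ℤ, ∫⁻ x in Qd n k m, g x := by
  rw [← lintegral_iUnion (fun m => measurableSet_Qd k m) (Qd_pairwise k) g, Qd_iUnion,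
    Measure.restrict_univ]

lemma sqrt_sq (x : ℝ≥0∞) : (x ^ (1/2 : ℝ)) ^ (2:ℕ) = x := by
  rw [← ENNReal.rpow_natCast (x ^ (1/2:ℝ)) 2, ← ENNReal.rpow_mul]
  norm_num

lemma rpow_two_eq (x : ℝ≥0∞) : x ^ (2:ℝ) = x ^ (2:ℕ) := by
  rw [← ENNReal.rpow_natCast x 2]; norm_num

/-- per-cube Cauchy–Schwarz -/
lemma intc_sq_le (φ : EuclideanSpace ℝ (Fin n) → ℝ≥0∞) (hφ : Measurable φ) (k : ℤ)
    (m : Fin n → ℤ) :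
    (∫⁻ y in Qd n k m, φ y) ^ 2 ≤ (∫⁻ y in Qd n k m, (φ y) ^ 2) * lvol n k := by
  have hconj : Real.HolderConjugate 2 2 := ⟨by norm_num, by norm_num, by norm_num⟩
  have hCS := ENNReal.lintegral_mul_le_Lp_mul_Lq (volume.restrict (Qd n k m)) hconj
    hφ.aemeasurable (aemeasurable_const (b := (1:ℝ≥0∞)))
  simp only [Pi.mul_apply, mul_one, ENNReal.one_rpow, lintegral_const,
    Measure.restrict_apply MeasurableSet.univ, Set.univ_inter, one_mul] at hCS
  rw [volume_Qd' k m] at hCS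
  calc (∫⁻ y in Qd n k m, φ y) ^ 2
      ≤ ((∫⁻ y in Qd n k m, (φ y) ^ (2:ℝ)) ^ (1/2:ℝ) * (lvol n k) ^ (1/2:ℝ)) ^ (2:ℕ) := by
        gcongr
    _ = (∫⁻ y in Qd n k m, (φ y) ^ 2) * lvol n k := by
        rw [mul_pow, sqrt_sq, sqrt_sq]
        congr 1
        apply lintegral_congr
        intro y
        exact rpow_two_eq (φ y)

lemma av_sq_vol_le (φ : EuclideanSpace ℝ (Fin n) → ℝ≥0∞) (hφ : Measurable φ) (k : ℤ)
    (m : Fin n → ℤ) :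
    (av φ k m) ^ 2 * lvol n k ≤ ∫⁻ y in Qd n k m, (φ y) ^ 2 := by
  have h0 : lvol n k ≠ 0 := (lvol_pos (n := n) k).ne'
  have ht : lvol n k ≠ ⊤ := lvol_ne_top k
  unfold av
  rw [div_eq_mul_inv, mul_pow, mul_assoc]
  have hcanc : (lvol n k)⁻¹ ^ 2 * lvol n k = (lvol n k)⁻¹ := by
    rw [pow_two, mul_assoc, ENNReal.inv_mul_cancel h0 ht, mul_one]
  rw [hcanc, ← div_eq_mul_inv, ENNReal.div_le_iff h0 ht]
  exact intc_sq_le φ hφ k m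
/-! maximal function machinery -/

def gk (φ : EuclideanSpace ℝ (Fin n) → ℝ≥0∞) (k : ℤ) (x : EuclideanSpace ℝ (Fin n)) : ℝ≥0∞ :=
  ∑' m : Fin n → ℤ, (Qd n k m).indicator (fun _ => av φ k m) x

lemma gk_apply (φ : EuclideanSpace ℝ (Fin n) → ℝ≥0∞) (k : ℤ) (x : EuclideanSpace ℝ (Fin n)) :
    gk φ k x = av φ k (idx k x) := by
  unfold gk
  rw [tsum_eq_single (idx k x)]
  · rw [Set.indicator_of_mem (mem_Qd_idx k x)]
  · intro m hm
    rw [Set.indicator_of_notMem]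
    intro hx
    exact hm (mem_Qd_iff.1 hx).symm

lemma measurable_gk (φ : EuclideanSpace ℝ (Fin n) → ℝ≥0∞) (k : ℤ) : Measurable (gk φ k) :=
  Measurable.ennreal_tsum fun m => measurable_const.indicator (measurableSet_Qd k m)

def Ic (N : ℕ) : Finset ℤ := Finset.Icc (-(N:ℤ)) N

def MN (φ : EuclideanSpace ℝ (Fin n) → ℝ≥0∞) (N : ℕ) (x : EuclideanSpace ℝ (Fin n)) : ℝ≥0∞ :=
  (Ic N).sup fun k => gk φ k x

lemma measurable_MN (φ : EuclideanSpace ℝ (Fin n) → ℝ≥0∞) (N : ℕ) : Measurable (MN φ N) := by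
  unfold MN
  induction (Ic N) using Finset.induction_on with
  | empty => simpa using measurable_const
  | insert _ _ h ih =>
      simp only [Finset.sup_insert]
      exact (measurable_gk φ _).sup ih

lemma lt_MN_iff {φ : EuclideanSpace ℝ (Fin n) → ℝ≥0∞} {N : ℕ} {el : ℝ≥0∞}
    {x : EuclideanSpace ℝ (Fin n)} :
    el < MN φ N x ↔ ∃ k ∈ Ic N, el < av φ k (idx k x) := by
  unfold MN
  rw [Finset.lt_sup_iff]
  simp_rw [gk_apply]

lemma mul_le_sq_add_sq (a b : ℝ≥0∞) : a * b ≤ a^2 + b^2 := by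
  rcases le_total a b with h | h
  · calc a * b ≤ b * b := by gcongr
      _ = b^2 := (sq b).symm
      _ ≤ a^2 + b^2 := le_add_self
  · calc a * b ≤ a * a := by gcongr
      _ = a^2 := (sq a).symm
      _ ≤ a^2 + b^2 := le_self_add

lemma sq_sum_le (s : Finset ℤ) (g : ℤ → ℝ≥0∞) :
    (∑ k ∈ s, g k) ^ 2 ≤ 2 * s.card * ∑ k ∈ s, (g k)^2 := by
  rw [sq, Finset.sum_mul_sum]
  calc ∑ i ∈ s, ∑ j ∈ s, g i * g j ≤ ∑ i ∈ s, ∑ j ∈ s, ((g i)^2 + (g j)^2) := by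
        gcongr with i hi j hj
        exact mul_le_sq_add_sq _ _
    _ = 2 * s.card * ∑ k ∈ s, (g k)^2 := by
        simp only [Finset.sum_add_distrib, Finset.sum_const, nsmul_eq_mul,
          ← Finset.sum_mul, ← Finset.mul_sum]
        ring
/-! stopping-time (maximal cube) machinery -/

def cpt (n : ℕ) (k : ℤ) (m : Fin n → ℤ) : EuclideanSpace ℝ (Fin n) :=
  WithLp.toLp 2 (fun i => (m i : ℝ) * (2:ℝ)^k)

lemma cpt_mem (k : ℤ) (m : Fin n → ℤ) : cpt n k m ∈ Qd n k m := by
  intro i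
  have hp := two_zpow_pos k
  constructor
  · exact le_refl _
  · have : (m i : ℝ) < (m i : ℝ) + 1 := by linarith
    calc cpt n k m i = (m i : ℝ) * 2^k := rfl
      _ < ((m i : ℝ) + 1) * 2^k := by nlinarith

def Pmax (φ : EuclideanSpace ℝ (Fin n) → ℝ≥0∞) (N : ℕ) (el : ℝ≥0∞) :
    Set (ℤ × (Fin n → ℤ)) :=
  {p | p.1 ∈ Ic N ∧ el < av φ p.1 p.2 ∧
    ∀ k' ∈ Ic N, p.1 < k' → ∀ M', Qd n p.1 p.2 ⊆ Qd n k' M' → ¬ (el < av φ k' M')}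

lemma exists_maximal (φ : EuclideanSpace ℝ (Fin n) → ℝ≥0∞) {N : ℕ} {el : ℝ≥0∞} {k : ℤ}
    {m : Fin n → ℤ} (hk : k ∈ Ic N) (hav : el < av φ k m) :
    ∃ p ∈ Pmax φ N el, k ≤ p.1 ∧ Qd n k m ⊆ Qd n p.1 p.2 := by
  classical
  set x₀ := cpt n k m with hx₀
  have hx₀m : x₀ ∈ Qd n k m := cpt_mem k m
  have hidx : idx k x₀ = m := mem_Qd_iff.1 hx₀m
  simp only [Ic, Finset.mem_Icc] at hk
  set s := (Finset.Icc k (N:ℤ)).filter (fun k' => el < av φ k' (idx k' x₀)) with hs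
  have hks : k ∈ s := by
    simp only [hs, Finset.mem_filter, Finset.mem_Icc, le_refl, true_and]
    rw [hidx]
    exact ⟨hk.2, hav⟩
  have hsne : s.Nonempty := ⟨k, hks⟩
  set K := s.max' hsne with hK
  have hKs : K ∈ s := s.max'_mem hsne
  simp only [hs, Finset.mem_filter, Finset.mem_Icc] at hKs
  obtain ⟨⟨hkK, hKN⟩, hKav⟩ := hKs
  have hKIc : K ∈ Ic N := by
    simp only [Ic, Finset.mem_Icc]
    omega
  have hsub : Qd n k m ⊆ Qd n K (idx K x₀) :=
    Qd_nested hkK ⟨x₀, hx₀m, mem_Qd_idx K x₀⟩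
  refine ⟨(K, idx K x₀), ⟨hKIc, hKav, ?_⟩, hkK, hsub⟩
  intro k' hk' hKk' M' hsub' hav'
  have hx₀' : x₀ ∈ Qd n k' M' := hsub' (mem_Qd_idx K x₀)
  have : M' = idx k' x₀ := (mem_Qd_iff.1 hx₀').symm
  subst this
  have hk's : k' ∈ s := by
    simp only [hs, Finset.mem_filter, Finset.mem_Icc]
    simp only [Ic, Finset.mem_Icc] at hk'
    exact ⟨⟨by omega, hk'.2⟩, hav'⟩
  have := s.le_max' k' hk's
  omega

lemma Pmax_pairwiseDisjoint (φ : EuclideanSpace ℝ (Fin n) → ℝ≥0∞) (N : ℕ) (el : ℝ≥0∞) :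
    (Pmax φ N el).PairwiseDisjoint (fun p => Qd n p.1 p.2) := by
  have key : ∀ p ∈ Pmax φ N el, ∀ q ∈ Pmax φ N el, p.1 ≤ q.1 → p ≠ q →
      Disjoint (Qd n p.1 p.2) (Qd n q.1 q.2) := by
    intro p hp q hq hle hne
    by_contra hcon
    rw [Set.not_disjoint_iff_nonempty_inter] at hcon
    rcases eq_or_lt_of_le hle with heq | hlt
    · by_cases hm : p.2 = q.2
      · exact hne (Prod.ext heq hm)
      · obtain ⟨z, hz1, hz2⟩ := hcon
        rw [heq] at hz1
        exact hm ((mem_Qd_iff.1 hz1).symm.trans (mem_Qd_iff.1 hz2))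
    · have hsub := Qd_nested hle hcon
      exact hp.2.2 q.1 hq.1 hlt q.2 hsub hq.2.1
  intro p hp q hq hne
  rcases le_total p.1 q.1 with h | h
  · exact key p hp q hq h hne
  · exact (key q hq p hp h hne.symm).symm

lemma MN_gt_eq_biUnion (φ : EuclideanSpace ℝ (Fin n) → ℝ≥0∞) (N : ℕ) (el : ℝ≥0∞) :
    {x | el < MN φ N x} = ⋃ p ∈ Pmax φ N el, Qd n p.1 p.2 := by
  ext x
  simp only [Set.mem_setOf_eq, Set.mem_iUnion, exists_prop]
  constructor
  · intro hx
    obtain ⟨k, hk, hav⟩ := lt_MN_iff.1 hx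
    obtain ⟨p, hp, _, hsub⟩ := exists_maximal φ hk hav
    exact ⟨p, hp, hsub (mem_Qd_idx k x)⟩
  · rintro ⟨p, hp, hxp⟩
    apply lt_MN_iff.2
    refine ⟨p.1, hp.1, ?_⟩
    rw [mem_Qd_iff.1 hxp]
    exact hp.2.1
/-! weak type estimate and Carleson counting -/

lemma weak_type (φ : EuclideanSpace ℝ (Fin n) → ℝ≥0∞) (N : ℕ) {el : ℝ≥0∞}
    (h0 : el ≠ 0) (ht : el ≠ ⊤) :
    volume {x | el < MN φ N x} ≤ el⁻¹ * ∫⁻ x in {x | el < MN φ N x}, φ x := by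
  rw [MN_gt_eq_biUnion]
  rw [measure_biUnion (Set.to_countable _) (Pmax_pairwiseDisjoint φ N el)
    (fun p _ => measurableSet_Qd p.1 p.2)]
  rw [lintegral_biUnion₀ (Set.to_countable _)
    (fun p _ => (measurableSet_Qd p.1 p.2).nullMeasurableSet)
    ((Pmax_pairwiseDisjoint φ N el).aedisjoint)]
  rw [← ENNReal.tsum_mul_left]
  apply ENNReal.tsum_le_tsum
  rintro ⟨p, hp⟩
  have hav : el < av φ p.1 p.2 := hp.2.1
  have hlv0 : lvol n p.1 ≠ 0 := (lvol_pos p.1).ne'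
  have hlvt : lvol n p.1 ≠ ⊤ := lvol_ne_top p.1
  have key : el * lvol n p.1 ≤ ∫⁻ y in Qd n p.1 p.2, φ y := by
    rw [← ENNReal.le_div_iff_mul_le (Or.inl hlv0) (Or.inl hlvt)]
    exact hav.le
  calc volume (Qd n p.1 p.2) = lvol n p.1 := volume_Qd' p.1 p.2
    _ = el⁻¹ * (el * lvol n p.1) := by
        rw [← mul_assoc, ENNReal.inv_mul_cancel h0 ht, one_mul]
    _ ≤ el⁻¹ * ∫⁻ y in Qd n p.1 p.2, φ y := by gcongr

def piece (n : ℕ) (q : ℤ × (Fin n → ℤ)) : Set (EuclideanSpace ℝ (Fin n) × ℝ) :=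
  Qd n q.1 q.2 ×ˢ Set.Ico ((2:ℝ)^(q.1-1)) ((2:ℝ)^q.1)

lemma measurableSet_piece (q : ℤ × (Fin n → ℤ)) : MeasurableSet (piece n q) :=
  (measurableSet_Qd q.1 q.2).prod measurableSet_Ico

lemma piece_disjoint : Pairwise (Function.onFun Disjoint (piece n)) := by
  intro q q' hne
  rw [Function.onFun, Set.disjoint_left]
  rintro ⟨x, t⟩ ⟨hx, ht⟩ ⟨hx', ht'⟩
  simp only [Set.mem_Ico] at ht ht'
  by_cases hk : q.1 = q'.1
  · have hmm : q.2 ≠ q'.2 := fun h => hne (Prod.ext hk h)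
    have := Qd_disjoint (n := n) (k := q.1) hmm
    rw [Set.disjoint_left] at this
    exact this hx (hk ▸ hx')
  · rcases lt_or_gt_of_ne hk with h | h
    · have : (2:ℝ)^q.1 ≤ (2:ℝ)^(q'.1-1) :=
        zpow_le_zpow_right₀ (by norm_num) (by omega)
      linarith [ht.2, ht'.1]
    · have : (2:ℝ)^q'.1 ≤ (2:ℝ)^(q.1-1) :=
        zpow_le_zpow_right₀ (by norm_num) (by omega)
      linarith [ht.1, ht'.2]

lemma slice_bound (φ : EuclideanSpace ℝ (Fin n) → ℝ≥0∞) (N : ℕ) {el : ℝ≥0∞}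
    (μ : Measure (EuclideanSpace ℝ (Fin n) × ℝ)) {C : ℝ}
    (hCarl' : ∀ k m, μ (Qd n k m ×ˢ Set.Ioo (0:ℝ) ((2:ℝ)^k)) ≤ ENNReal.ofReal C * lvol n k) :
    ∑' q : ℤ × (Fin n → ℤ),
        (if q.1 ∈ Ic N ∧ el < av φ q.1 q.2 then μ (piece n q) else 0)
      ≤ ENNReal.ofReal C * volume {x | el < MN φ N x} := by
  classical
  set G : Set (ℤ × (Fin n → ℤ)) := {q | q.1 ∈ Ic N ∧ el < av φ q.1 q.2} with hG
  have h1 : ∀ q, (if q.1 ∈ Ic N ∧ el < av φ q.1 q.2 then μ (piece n q) else 0) =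
      G.indicator (fun q => μ (piece n q)) q := by
    intro q
    rw [Set.indicator_apply]
    rfl
  simp_rw [h1]
  rw [← tsum_subtype G (fun q => μ (piece n q))]
  rw [← measure_biUnion (Set.to_countable G)
    ((piece_disjoint (n := n)).set_pairwise G) (fun q _ => measurableSet_piece q)]
  have hincl : (⋃ q ∈ G, piece n q) ⊆
      ⋃ p ∈ Pmax φ N el, (Qd n p.1 p.2 ×ˢ Set.Ioo (0:ℝ) ((2:ℝ)^p.1)) := by
    intro z hz
    simp only [Set.mem_iUnion, exists_prop] at hz ⊢
    obtain ⟨q, hqG, hzq⟩ := hz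
    obtain ⟨p, hp, hle, hsub⟩ := exists_maximal φ hqG.1 hqG.2
    refine ⟨p, hp, ?_⟩
    obtain ⟨hz1, hz2⟩ := hzq
    simp only [Set.mem_Ico] at hz2
    refine ⟨hsub hz1, ?_, ?_⟩
    · exact lt_of_lt_of_le (two_zpow_pos (q.1 - 1)) hz2.1
    · exact lt_of_lt_of_le hz2.2 (zpow_le_zpow_right₀ (by norm_num) hle)
  calc μ (⋃ q ∈ G, piece n q) ≤ μ (⋃ p ∈ Pmax φ N el, (Qd n p.1 p.2 ×ˢ Set.Ioo (0:ℝ) ((2:ℝ)^p.1))) :=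
        measure_mono hincl
    _ ≤ ∑' p : (Pmax φ N el : Set (ℤ × (Fin n → ℤ))),
          μ (Qd n (p:ℤ × (Fin n → ℤ)).1 p.1.2 ×ˢ Set.Ioo (0:ℝ) ((2:ℝ)^(p:ℤ × (Fin n → ℤ)).1)) := by
        apply measure_biUnion_le μ (Set.to_countable _)
    _ ≤ ∑' p : (Pmax φ N el : Set (ℤ × (Fin n → ℤ))), ENNReal.ofReal C * lvol n (p:ℤ × (Fin n → ℤ)).1 := by
        apply ENNReal.tsum_le_tsum
        rintro ⟨p, hp⟩
        exact hCarl' p.1 p.2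
    _ = ENNReal.ofReal C * ∑' p : (Pmax φ N el : Set (ℤ × (Fin n → ℤ))),
          volume (Qd n (p:ℤ × (Fin n → ℤ)).1 (p:ℤ × (Fin n → ℤ)).2) := by
        rw [← ENNReal.tsum_mul_left]
        congr 1
        funext p
        rw [volume_Qd']
    _ = ENNReal.ofReal C * volume {x | el < MN φ N x} := by
        rw [← measure_biUnion (Set.to_countable _) (Pmax_pairwiseDisjoint φ N el)
          (fun p _ => measurableSet_Qd p.1 p.2), MN_gt_eq_biUnion]
/-! L² control of the truncated maximal function -/

lemma lintegral_gk_sq_le (φ : EuclideanSpace ℝ (Fin n) → ℝ≥0∞) (hφ : Measurable φ) (k : ℤ) :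
    ∫⁻ x, (gk φ k x)^2 ≤ ∫⁻ x, (φ x)^2 := by
  rw [lintegral_partition k (fun x => (gk φ k x)^2),
    lintegral_partition k (fun x => (φ x)^2)]
  apply ENNReal.tsum_le_tsum
  intro m
  have : ∫⁻ x in Qd n k m, (gk φ k x)^2 = (av φ k m)^2 * lvol n k := by
    rw [setLIntegral_congr_fun (measurableSet_Qd k m)
      (fun x hx => by rw [gk_apply, mem_Qd_iff.1 hx])]
    rw [setLIntegral_const, volume_Qd']
  rw [this]
  exact av_sq_vol_le φ hφ k m

lemma MN_le_sum (φ : EuclideanSpace ℝ (Fin n) → ℝ≥0∞) (N : ℕ) (x : EuclideanSpace ℝ (Fin n)) :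
    MN φ N x ≤ ∑ k ∈ Ic N, gk φ k x :=
  Finset.sup_le fun k hk =>
    Finset.single_le_sum (f := fun k => gk φ k x) (fun _ _ => zero_le) hk

lemma lintegral_MN_sq_ne_top (φ : EuclideanSpace ℝ (Fin n) → ℝ≥0∞) (hφ : Measurable φ) (N : ℕ)
    (hF : ∫⁻ x, (φ x)^2 ≠ ⊤) : ∫⁻ x, (MN φ N x)^2 ≠ ⊤ := by
  have h1 : ∫⁻ x, (MN φ N x)^2 ≤ 2 * (Ic N).card * ((Ic N).card * ∫⁻ x, (φ x)^2) := by
    calc ∫⁻ x, (MN φ N x)^2 ≤ ∫⁻ x, (∑ k ∈ Ic N, gk φ k x)^2 := by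
          apply lintegral_mono
          intro x
          exact pow_le_pow_left₀ zero_le (MN_le_sum φ N x) 2
      _ ≤ ∫⁻ x, 2 * (Ic N).card * ∑ k ∈ Ic N, (gk φ k x)^2 := by
          apply lintegral_mono
          intro x
          exact sq_sum_le (Ic N) (fun k => gk φ k x)
      _ = 2 * (Ic N).card * ∑ k ∈ Ic N, ∫⁻ x, (gk φ k x)^2 := by
          rw [lintegral_const_mul _ (by
            apply Finset.measurable_sum
            intro k _
            exact ((measurable_gk φ k).pow_const 2))]
          rw [lintegral_finset_sum _ (fun k _ => (measurable_gk φ k).pow_const 2)]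
      _ ≤ 2 * (Ic N).card * ∑ k ∈ Ic N, ∫⁻ x, (φ x)^2 :=
          mul_le_mul_right (Finset.sum_le_sum fun k _ => lintegral_gk_sq_le φ hφ k) _
      _ = 2 * (Ic N).card * ((Ic N).card * ∫⁻ x, (φ x)^2) := by
          rw [Finset.sum_const, nsmul_eq_mul]
  intro hcon
  rw [hcon] at h1
  have hne : 2 * ((Ic N).card : ℝ≥0∞) * (((Ic N).card : ℝ≥0∞) * ∫⁻ x, (φ x)^2) ≠ ⊤ :=
    ENNReal.mul_ne_top (ENNReal.mul_ne_top ENNReal.ofNat_ne_top (ENNReal.natCast_ne_top _))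
      (ENNReal.mul_ne_top (ENNReal.natCast_ne_top _) hF)
  exact hne (top_le_iff.1 h1)

lemma measurableSet_MNgt (φ : EuclideanSpace ℝ (Fin n) → ℝ≥0∞) (N : ℕ) (el : ℝ≥0∞) :
    MeasurableSet {x | el < MN φ N x} :=
  measurableSet_lt measurable_const (measurable_MN φ N)

/-- the key self-improving bound -/
lemma MN_sq_le_self (φ : EuclideanSpace ℝ (Fin n) → ℝ≥0∞) (hφ : Measurable φ) (N : ℕ) :
    ∫⁻ x, (MN φ N x)^2 ≤ 2 * ∫⁻ x, φ x * MN φ N x := by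
  have h1 : ∀ x, (MN φ N x)^2 = ∫⁻ l in Set.Ioi (0:ℝ), 2 * ENNReal.ofReal l * ind (MN φ N x) l :=
    fun x => (layer1 _).symm
  rw [lintegral_congr h1, lintegral_lintegral_swap]
  swap
  · apply Measurable.aemeasurable
    apply Measurable.mul
    · exact (ENNReal.measurable_ofReal.comp measurable_snd).const_mul 2
    · unfold ind
      apply Measurable.ite _ measurable_const measurable_const
      apply measurableSet_lt
      · exact ENNReal.measurable_ofReal.comp measurable_snd
      · exact (measurable_MN φ N).comp measurable_fst
  -- now : ∫⁻ l in Ioi 0, ∫⁻ x, 2 * ofReal l * ind (MN x) l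
  have key : ∀ l ∈ Set.Ioi (0:ℝ),
      (∫⁻ x, 2 * ENNReal.ofReal l * ind (MN φ N x) l) ≤
        2 * ∫⁻ x in {x | ENNReal.ofReal l < MN φ N x}, φ x := by
    intro l hl
    simp only [Set.mem_Ioi] at hl
    have h0 : ENNReal.ofReal l ≠ 0 := by
      simp only [ne_eq, ENNReal.ofReal_eq_zero, not_le]; exact hl
    have hlt : ENNReal.ofReal l ≠ ⊤ := ENNReal.ofReal_ne_top
    have : ∀ x, 2 * ENNReal.ofReal l * ind (MN φ N x) l =
        2 * ENNReal.ofReal l * Set.indicator {x | ENNReal.ofReal l < MN φ N x} (fun _ => 1) x := by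
      intro x
      unfold ind
      rw [Set.indicator_apply]
      rfl
    simp_rw [this]
    rw [lintegral_const_mul _ (measurable_const.indicator (measurableSet_MNgt φ N _))]
    rw [lintegral_indicator (measurableSet_MNgt φ N _), lintegral_one,
      Measure.restrict_apply MeasurableSet.univ, Set.univ_inter]
    calc 2 * ENNReal.ofReal l * volume {x | ENNReal.ofReal l < MN φ N x}
        ≤ 2 * ENNReal.ofReal l * ((ENNReal.ofReal l)⁻¹ *
            ∫⁻ x in {x | ENNReal.ofReal l < MN φ N x}, φ x) := by
          gcongr
          exact weak_type φ N h0 hlt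
      _ = 2 * (ENNReal.ofReal l * (ENNReal.ofReal l)⁻¹) *
            ∫⁻ x in {x | ENNReal.ofReal l < MN φ N x}, φ x := by ring
      _ = 2 * ∫⁻ x in {x | ENNReal.ofReal l < MN φ N x}, φ x := by
          rw [ENNReal.mul_inv_cancel h0 hlt, mul_one]
  calc ∫⁻ l in Set.Ioi (0:ℝ), ∫⁻ x, 2 * ENNReal.ofReal l * ind (MN φ N x) l
      ≤ ∫⁻ l in Set.Ioi (0:ℝ), 2 * ∫⁻ x in {x | ENNReal.ofReal l < MN φ N x}, φ x := by
        apply setLIntegral_mono' measurableSet_Ioi key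
    _ = 2 * ∫⁻ l in Set.Ioi (0:ℝ), ∫⁻ x, Set.indicator {x | ENNReal.ofReal l < MN φ N x} φ x := by
        rw [← lintegral_const_mul' _ _ ENNReal.ofNat_ne_top]
        congr 1
        funext l
        rw [lintegral_indicator (measurableSet_MNgt φ N _)]
    _ = 2 * ∫⁻ x, φ x * MN φ N x := by
        congr 1
        have : ∀ l x, Set.indicator {x | ENNReal.ofReal l < MN φ N x} φ x =
            φ x * ind (MN φ N x) l := by
          intro l x
          unfold ind
          rw [Set.indicator_apply]
          simp only [Set.mem_setOf_eq]
          split <;> simp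
        simp_rw [this]
        rw [lintegral_lintegral_swap]
        · congr 1
          funext x
          rw [lintegral_const_mul _ (measurable_ind _), layer0]
        · apply Measurable.aemeasurable
          apply Measurable.mul
          · exact hφ.comp measurable_snd
          · unfold ind
            apply Measurable.ite _ measurable_const measurable_const
            apply measurableSet_lt
            · exact ENNReal.measurable_ofReal.comp measurable_fst
            · exact (measurable_MN φ N).comp measurable_snd
/-! the L² bound for the maximal function, and the main truncated estimate -/

lemma CS_step (φ ψ : EuclideanSpace ℝ (Fin n) → ℝ≥0∞) (hφ : Measurable φ) (hψ : Measurable ψ) :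
    ∫⁻ x, φ x * ψ x ≤ (∫⁻ x, (φ x)^2) ^ (1/2:ℝ) * (∫⁻ x, (ψ x)^2) ^ (1/2:ℝ) := by
  have hconj : Real.HolderConjugate 2 2 := ⟨by norm_num, by norm_num, by norm_num⟩
  have := ENNReal.lintegral_mul_le_Lp_mul_Lq volume hconj hφ.aemeasurable hψ.aemeasurable
  simp only [Pi.mul_apply] at this
  calc ∫⁻ x, φ x * ψ x ≤ (∫⁻ x, (φ x)^(2:ℝ)) ^ (1/2:ℝ) * (∫⁻ x, (ψ x)^(2:ℝ)) ^ (1/2:ℝ) := this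
    _ = (∫⁻ x, (φ x)^2) ^ (1/2:ℝ) * (∫⁻ x, (ψ x)^2) ^ (1/2:ℝ) := by
      rw [lintegral_congr (fun x => rpow_two_eq (φ x)),
        lintegral_congr (fun x => rpow_two_eq (ψ x))]

lemma sqrt_add_half (A : ℝ≥0∞) : A ^ (1/2:ℝ) * A ^ (1/2:ℝ) = A := by
  rw [← ENNReal.rpow_add_of_nonneg (1/2) (1/2) (by norm_num) (by norm_num)]
  norm_num

lemma sqrt_MN_bound (φ : EuclideanSpace ℝ (Fin n) → ℝ≥0∞) (hφ : Measurable φ) (N : ℕ)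
    (hF : ∫⁻ x, (φ x)^2 ≠ ⊤) :
    (∫⁻ x, (MN φ N x)^2) ^ (1/2:ℝ) ≤ 2 * (∫⁻ x, (φ x)^2) ^ (1/2:ℝ) := by
  set A := ∫⁻ x, (MN φ N x)^2 with hA
  set F := ∫⁻ x, (φ x)^2 with hFd
  have hAt : A ≠ ⊤ := lintegral_MN_sq_ne_top φ hφ N hF
  by_cases hA0 : A = 0
  · rw [hA0, ENNReal.zero_rpow_of_pos (by norm_num)]
    exact zero_le
  have hchain : A ≤ 2 * F ^ (1/2:ℝ) * A ^ (1/2:ℝ) := by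
    calc A ≤ 2 * ∫⁻ x, φ x * MN φ N x := MN_sq_le_self φ hφ N
      _ ≤ 2 * (F ^ (1/2:ℝ) * A ^ (1/2:ℝ)) :=
          mul_le_mul_right (CS_step φ (MN φ N) hφ (measurable_MN φ N)) 2
      _ = 2 * F ^ (1/2:ℝ) * A ^ (1/2:ℝ) := by ring
  have hs0 : A ^ (1/2:ℝ) ≠ 0 := by
    simp only [ne_eq, ENNReal.rpow_eq_zero_iff, not_or]
    constructor
    · rintro ⟨h, -⟩; exact hA0 h
    · rintro ⟨h, -⟩; exact hAt h
  have hst : A ^ (1/2:ℝ) ≠ ⊤ := by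
    intro h
    rw [ENNReal.rpow_eq_top_iff] at h
    rcases h with ⟨h, -⟩ | ⟨h, -⟩
    · exact hA0 h
    · exact hAt h
  rw [← ENNReal.mul_le_mul_iff_left hs0 hst, sqrt_add_half]
  exact hchain

lemma coarea_MN (φ : EuclideanSpace ℝ (Fin n) → ℝ≥0∞) (hφ : Measurable φ) (N : ℕ) :
    ∫⁻ l in Set.Ioi (0:ℝ), ∫⁻ x in {x | ENNReal.ofReal l < MN φ N x}, φ x
      = ∫⁻ x, φ x * MN φ N x := by
  have hrw : ∀ l : ℝ, ∫⁻ x in {x | ENNReal.ofReal l < MN φ N x}, φ x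
      = ∫⁻ x, φ x * ind (MN φ N x) l := by
    intro l
    rw [← lintegral_indicator (measurableSet_MNgt φ N _)]
    congr 1
    funext x
    unfold ind
    rw [Set.indicator_apply]
    simp only [Set.mem_setOf_eq]
    split <;> simp
  rw [lintegral_congr hrw  , lintegral_lintegral_swap]
  · congr 1
    funext x
    rw [lintegral_const_mul _ (measurable_ind _), layer0]
  · apply Measurable.aemeasurable
    apply Measurable.mul
    · exact hφ.comp measurable_snd
    · unfold ind
      apply Measurable.ite _ measurable_const measurable_const
      apply measurableSet_lt
      · exact ENNReal.measurable_ofReal.comp measurable_fst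
      · exact (measurable_MN φ N).comp measurable_snd

lemma main_trunc (φ : EuclideanSpace ℝ (Fin n) → ℝ≥0∞) (hφ : Measurable φ)
    (hF : ∫⁻ x, (φ x)^2 ≠ ⊤)
    (μ : Measure (EuclideanSpace ℝ (Fin n) × ℝ)) {C : ℝ}
    (hCarl' : ∀ k m, μ (Qd n k m ×ˢ Set.Ioo (0:ℝ) ((2:ℝ)^k)) ≤ ENNReal.ofReal C * lvol n k)
    (N : ℕ) :
    ∑' q : ℤ × (Fin n → ℤ),
        (if q.1 ∈ Ic N then 1 else 0) * (av φ q.1 q.2)^2 * μ (piece n q)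
      ≤ 4 * ENNReal.ofReal C * ∫⁻ x, (φ x)^2 := by
  classical
  have hrep : ∀ q : ℤ × (Fin n → ℤ),
      (if q.1 ∈ Ic N then 1 else 0) * (av φ q.1 q.2)^2 * μ (piece n q)
      = ∫⁻ l in Set.Ioi (0:ℝ), 2 * ENNReal.ofReal l *
          (if q.1 ∈ Ic N ∧ ENNReal.ofReal l < av φ q.1 q.2 then μ (piece n q) else 0) := by
    intro q
    by_cases hq : q.1 ∈ Ic N
    · simp only [hq, if_true, one_mul, true_and]
      rw [← layer1 (av φ q.1 q.2), ← lintegral_mul_const _ (by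
        apply Measurable.mul
        · exact (ENNReal.measurable_ofReal.const_mul 2)
        · exact measurable_ind _)]
      congr 1
      funext l
      unfold ind
      split <;> simp
    · simp only [hq, if_false, zero_mul, false_and, mul_zero, lintegral_zero]
  simp_rw [hrep]
  rw [← lintegral_tsum (fun q => by
    apply Measurable.aemeasurable
    apply Measurable.mul
    · exact (ENNReal.measurable_ofReal.const_mul 2)
    · apply Measurable.ite _ measurable_const measurable_const
      by_cases hq : q.1 ∈ Ic N
      · simp only [hq, true_and]
        exact measurableSet_lt ENNReal.measurable_ofReal measurable_const
      · simp only [hq, false_and]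
        exact MeasurableSet.empty.congr (by ext l; simp))]
  have key : ∀ l ∈ Set.Ioi (0:ℝ),
      (∑' q : ℤ × (Fin n → ℤ), 2 * ENNReal.ofReal l *
          (if q.1 ∈ Ic N ∧ ENNReal.ofReal l < av φ q.1 q.2 then μ (piece n q) else 0))
      ≤ 2 * ENNReal.ofReal C *
          ∫⁻ x in {x | ENNReal.ofReal l < MN φ N x}, φ x := by
    intro l hl
    simp only [Set.mem_Ioi] at hl
    have h0 : ENNReal.ofReal l ≠ 0 := by
      simp only [ne_eq, ENNReal.ofReal_eq_zero, not_le]; exact hl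
    have hlt : ENNReal.ofReal l ≠ ⊤ := ENNReal.ofReal_ne_top
    rw [ENNReal.tsum_mul_left]
    calc 2 * ENNReal.ofReal l * ∑' q : ℤ × (Fin n → ℤ),
          (if q.1 ∈ Ic N ∧ ENNReal.ofReal l < av φ q.1 q.2 then μ (piece n q) else 0)
        ≤ 2 * ENNReal.ofReal l *
            (ENNReal.ofReal C * volume {x | ENNReal.ofReal l < MN φ N x}) :=
          mul_le_mul_right (slice_bound φ N μ hCarl') _
      _ ≤ 2 * ENNReal.ofReal l * (ENNReal.ofReal C * ((ENNReal.ofReal l)⁻¹ *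
            ∫⁻ x in {x | ENNReal.ofReal l < MN φ N x}, φ x)) := by
          gcongr
          exact weak_type φ N h0 hlt
      _ = (ENNReal.ofReal l * (ENNReal.ofReal l)⁻¹) * (2 * ENNReal.ofReal C *
            ∫⁻ x in {x | ENNReal.ofReal l < MN φ N x}, φ x) := by ring
      _ = 2 * ENNReal.ofReal C * ∫⁻ x in {x | ENNReal.ofReal l < MN φ N x}, φ x := by
          rw [ENNReal.mul_inv_cancel h0 hlt, one_mul]
  calc ∫⁻ l in Set.Ioi (0:ℝ), ∑' q : ℤ × (Fin n → ℤ), 2 * ENNReal.ofReal l *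
          (if q.1 ∈ Ic N ∧ ENNReal.ofReal l < av φ q.1 q.2 then μ (piece n q) else 0)
      ≤ ∫⁻ l in Set.Ioi (0:ℝ), 2 * ENNReal.ofReal C *
          ∫⁻ x in {x | ENNReal.ofReal l < MN φ N x}, φ x :=
        setLIntegral_mono' measurableSet_Ioi key
    _ = 2 * ENNReal.ofReal C * ∫⁻ l in Set.Ioi (0:ℝ),
          ∫⁻ x in {x | ENNReal.ofReal l < MN φ N x}, φ x := by
        rw [← lintegral_const_mul' _ _ (by
          exact ENNReal.mul_ne_top ENNReal.ofNat_ne_top ENNReal.ofReal_ne_top)]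
    _ = 2 * ENNReal.ofReal C * ∫⁻ x, φ x * MN φ N x := by rw [coarea_MN φ hφ N]
    _ ≤ 2 * ENNReal.ofReal C *
          ((∫⁻ x, (φ x)^2) ^ (1/2:ℝ) * (∫⁻ x, (MN φ N x)^2) ^ (1/2:ℝ)) :=
        mul_le_mul_right (CS_step φ (MN φ N) hφ (measurable_MN φ N)) _
    _ ≤ 2 * ENNReal.ofReal C *
          ((∫⁻ x, (φ x)^2) ^ (1/2:ℝ) * (2 * (∫⁻ x, (φ x)^2) ^ (1/2:ℝ))) := by
        gcongr
        exact sqrt_MN_bound φ hφ N hF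
    _ = 4 * ENNReal.ofReal C * ((∫⁻ x, (φ x)^2) ^ (1/2:ℝ) * (∫⁻ x, (φ x)^2) ^ (1/2:ℝ)) := by
        ring
    _ = 4 * ENNReal.ofReal C * ∫⁻ x, (φ x)^2 := by rw [sqrt_add_half]
/-! dyadic generation of a positive real -/

lemma rpow_zpow (j : ℤ) : (2:ℝ) ^ (j:ℝ) = (2:ℝ) ^ j := Real.rpow_intCast 2 j

lemma floor_logb_le {t : ℝ} (ht : 0 < t) : (2:ℝ)^(⌊Real.logb 2 t⌋) ≤ t := by
  have h := Real.rpow_logb (by norm_num : (0:ℝ) < 2) (by norm_num) ht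
  calc (2:ℝ)^(⌊Real.logb 2 t⌋) = (2:ℝ) ^ ((⌊Real.logb 2 t⌋ : ℝ)) := (rpow_zpow _).symm
    _ ≤ (2:ℝ) ^ Real.logb 2 t :=
        (Real.rpow_le_rpow_left_iff (by norm_num : (1:ℝ) < 2)).2 (Int.floor_le _)
    _ = t := h

lemma lt_floor_logb {t : ℝ} (ht : 0 < t) : t < (2:ℝ)^(⌊Real.logb 2 t⌋ + 1) := by
  have h := Real.rpow_logb (by norm_num : (0:ℝ) < 2) (by norm_num) ht
  calc t = (2:ℝ) ^ Real.logb 2 t := h.symm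
    _ < (2:ℝ) ^ ((⌊Real.logb 2 t⌋ + 1 : ℤ) : ℝ) := by
        refine (Real.rpow_lt_rpow_left_iff (by norm_num : (1:ℝ) < 2)).2 ?_
        push_cast
        exact Int.lt_floor_add_one _
    _ = (2:ℝ) ^ (⌊Real.logb 2 t⌋ + 1) := rpow_zpow _

lemma logb_unique {k : ℤ} {t : ℝ} (h1 : (2:ℝ)^(k-1) ≤ t) (h2 : t < (2:ℝ)^k) :
    ⌊Real.logb 2 t⌋ = k - 1 := by
  have htpos : 0 < t := lt_of_lt_of_le (two_zpow_pos (k-1)) h1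
  have hlogt := Real.rpow_logb (by norm_num : (0:ℝ) < 2) (by norm_num) htpos
  rw [Int.floor_eq_iff]
  constructor
  · have : (2:ℝ) ^ ((k:ℝ) - 1) ≤ (2:ℝ) ^ Real.logb 2 t := by
      rw [hlogt]
      calc (2:ℝ) ^ ((k:ℝ) - 1) = (2:ℝ) ^ (k - 1 : ℤ) := by
            rw [← rpow_zpow]; push_cast; ring_nf
        _ ≤ t := h1
    have := (Real.rpow_le_rpow_left_iff (by norm_num : (1:ℝ) < 2)).1 this
    push_cast
    linarith
  · have : (2:ℝ) ^ Real.logb 2 t < (2:ℝ) ^ (k:ℝ) := by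
      rw [hlogt, rpow_zpow]
      exact h2
    have := (Real.rpow_lt_rpow_left_iff (by norm_num : (1:ℝ) < 2)).1 this
    push_cast
    linarith
end DCE

/-- **dyadic Carleson embedding theorem.** If `μ` is a nonnegative measure
on `ℝⁿ × (0,∞)` with `μ(Q × (0, ℓ(Q))) ≤ C|Q|` for every dyadic cube `Q`, and `Sₜf(x)`
is the average of `f` over the dyadic cube containing `x` of generation matching `t`
(`ℓ(Q)/2 ≤ t < ℓ(Q)`), then `∫∫ |Sₜf(x)|² dμ(x,t) ≤ 4C‖f‖₂²` for all `f ∈ L²(ℝⁿ)`. -/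
theorem dyadic_carleson_embedding
    (n : ℕ) (C : ℝ) (hC : 0 ≤ C)
    (μ : Measure (EuclideanSpace ℝ (Fin n) × ℝ))
    -- the dyadic cubes: `Qc k m` has sidelength `2^k`
    (Qc : ℤ → (Fin n → ℤ) → Set (EuclideanSpace ℝ (Fin n)))
    (hQ : ∀ k m, Qc k m =
      {x | ∀ i, (m i : ℝ) * (2:ℝ) ^ k ≤ x i ∧ x i < ((m i : ℝ) + 1) * (2:ℝ) ^ k})
    -- the Carleson condition `μ(Q × (0, ℓ(Q))) ≤ C|Q|`
    (hCarl : ∀ k m, μ (Qc k m ×ˢ Set.Ioo (0:ℝ) ((2:ℝ) ^ k)) ≤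
      ENNReal.ofReal (C * ((2:ℝ) ^ k) ^ n))
    -- the generation of `t` : `2^(gen t - 1) ≤ t < 2^(gen t)`
    (gen : ℝ → ℤ) (hgen : ∀ t : ℝ, 0 < t → gen t = ⌊Real.logb 2 t⌋ + 1)
    -- the dyadic averaging operators
    (S : (EuclideanSpace ℝ (Fin n) → ℂ) → ℝ → EuclideanSpace ℝ (Fin n) → ℂ)
    (hS : ∀ f t x, S f t x = (((2:ℝ) ^ gen t) ^ n)⁻¹ •
      ∫ y in Qc (gen t) (fun i => ⌊x i / (2:ℝ) ^ gen t⌋), f y)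
    (f : EuclideanSpace ℝ (Fin n) → ℂ) (hfm : Measurable f) (hf : MemLp f 2) :
    ∫⁻ p in {p : EuclideanSpace ℝ (Fin n) × ℝ | 0 < p.2},
        (‖S f p.2 p.1‖₊ : ENNReal) ^ 2 ∂μ ≤
      4 * ENNReal.ofReal C * ∫⁻ x, (‖f x‖₊ : ENNReal) ^ 2 := by
  classical
  open DCE in
  set φ : EuclideanSpace ℝ (Fin n) → ℝ≥0∞ := fun x => (‖f x‖₊ : ℝ≥0∞) with hφdef
  have hφ : Measurable φ := hfm.nnnorm.coe_nnreal_ennreal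
  have hQd : ∀ k m, Qc k m = DCE.Qd n k m := fun k m => hQ k m
  -- `f` is square integrable
  have hF : ∫⁻ x, (φ x)^2 ≠ ⊤ := by
    have h2 := hf.2
    rw [eLpNorm_eq_lintegral_rpow_enorm_toReal (by norm_num) (by norm_num)] at h2
    simp only [ENNReal.toReal_ofNat, enorm_eq_nnnorm] at h2
    intro hcon
    have heq : ∫⁻ x, (‖f x‖₊ : ℝ≥0∞) ^ (2:ℝ) = ⊤ := by
      rw [← hcon]
      exact lintegral_congr fun x => DCE.rpow_two_eq (φ x)
    rw [heq, ENNReal.top_rpow_of_pos (by norm_num)] at h2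
    exact lt_irrefl _ h2
  -- Carleson condition in internal form
  have hCarl' : ∀ k m, μ (DCE.Qd n k m ×ˢ Set.Ioo (0:ℝ) ((2:ℝ)^k)) ≤
      ENNReal.ofReal C * DCE.lvol n k := by
    intro k m
    rw [← hQd k m]
    refine (hCarl k m).trans (le_of_eq ?_)
    rw [ENNReal.ofReal_mul hC]
    rfl
  -- the decomposition of the upper half space into dyadic pieces
  have hcover : {p : EuclideanSpace ℝ (Fin n) × ℝ | 0 < p.2} =
      ⋃ q : ℤ × (Fin n → ℤ), DCE.piece n q := by
    ext ⟨x, t⟩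
    simp only [Set.mem_setOf_eq, Set.mem_iUnion]
    constructor
    · intro ht
      refine ⟨(⌊Real.logb 2 t⌋ + 1, DCE.idx (⌊Real.logb 2 t⌋ + 1) x),
        DCE.mem_Qd_idx _ x, ?_⟩
      simp only [Set.mem_Ico]
      constructor
      · simpa using DCE.floor_logb_le ht
      · exact DCE.lt_floor_logb ht
    · rintro ⟨q, -, hq2⟩
      simp only [Set.mem_Ico] at hq2
      exact lt_of_lt_of_le (DCE.two_zpow_pos (q.1 - 1)) hq2.1
  -- the value of `S f` on each piece
  have hSval : ∀ q : ℤ × (Fin n → ℤ), ∀ p ∈ DCE.piece n q,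
      S f p.2 p.1 = (((2:ℝ)^q.1)^n)⁻¹ • ∫ y in DCE.Qd n q.1 q.2, f y := by
    rintro ⟨k, m⟩ ⟨x, t⟩ ⟨hx, ht⟩
    simp only [Set.mem_Ico] at ht
    have htpos : 0 < t := lt_of_lt_of_le (DCE.two_zpow_pos (k-1)) ht.1
    have hgent : gen t = k := by
      rw [hgen t htpos, DCE.logb_unique ht.1 ht.2]
      ring
    rw [hS f t x]
    simp only [hgent]
    rw [hQd]
    have hidx : (fun i => ⌊x i / (2:ℝ) ^ k⌋) = m := DCE.mem_Qd_iff.1 hx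
    rw [hidx]
  -- the constant value (in `ℝ≥0∞`) is dominated by the dyadic average of `‖f‖`
  have hnorm : ∀ q : ℤ × (Fin n → ℤ),
      ((‖(((2:ℝ)^q.1)^n)⁻¹ • ∫ y in DCE.Qd n q.1 q.2, f y‖₊ : ℝ≥0∞)) ≤
        DCE.av φ q.1 q.2 := by
    intro q
    have hpos : (0:ℝ) < ((2:ℝ)^q.1)^n := by positivity
    rw [nnnorm_smul, ENNReal.coe_mul]
    have h1 : ((‖(((2:ℝ)^q.1)^n)⁻¹‖₊ : ℝ≥0∞)) = (DCE.lvol n q.1)⁻¹ := by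
      rw [← enorm_eq_nnnorm, Real.enorm_eq_ofReal (by positivity), ENNReal.ofReal_inv_of_pos hpos]
      rfl
    rw [h1]
    calc (DCE.lvol n q.1)⁻¹ * (‖∫ y in DCE.Qd n q.1 q.2, f y‖₊ : ℝ≥0∞)
        ≤ (DCE.lvol n q.1)⁻¹ * ∫⁻ y in DCE.Qd n q.1 q.2, (‖f y‖₊ : ℝ≥0∞) :=
          mul_le_mul_right (enorm_integral_le_lintegral_enorm _) _
      _ = DCE.av φ q.1 q.2 := by
          rw [DCE.av, div_eq_mul_inv, mul_comm]
  -- main computation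
  calc ∫⁻ p in {p : EuclideanSpace ℝ (Fin n) × ℝ | 0 < p.2},
        (‖S f p.2 p.1‖₊ : ℝ≥0∞) ^ 2 ∂μ
      = ∑' q : ℤ × (Fin n → ℤ), ∫⁻ p in DCE.piece n q, (‖S f p.2 p.1‖₊ : ℝ≥0∞) ^ 2 ∂μ := by
        rw [hcover]
        exact lintegral_iUnion (fun q => DCE.measurableSet_piece q) DCE.piece_disjoint _
    _ = ∑' q : ℤ × (Fin n → ℤ),
          ((‖(((2:ℝ)^q.1)^n)⁻¹ • ∫ y in DCE.Qd n q.1 q.2, f y‖₊ : ℝ≥0∞))^2 * μ (DCE.piece n q) := by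
        congr 1
        funext q
        rw [setLIntegral_congr_fun (DCE.measurableSet_piece q)
          (fun p hp => by rw [hSval q p hp])]
        rw [setLIntegral_const]
    _ ≤ ∑' q : ℤ × (Fin n → ℤ), (DCE.av φ q.1 q.2)^2 * μ (DCE.piece n q) := by
        apply ENNReal.tsum_le_tsum
        intro q
        exact mul_le_mul_left (pow_le_pow_left₀ zero_le (hnorm q) 2) _
    _ ≤ 4 * ENNReal.ofReal C * ∫⁻ x, (φ x)^2 := by
        rw [ENNReal.tsum_eq_iSup_sum]
        apply iSup_le
        intro s
        set N : ℕ := s.sup (fun q => q.1.natAbs) with hN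
        have hsub : ∀ q ∈ s, q.1 ∈ DCE.Ic N := by
          intro q hq
          have h2 : q.1.natAbs ≤ N :=
            Finset.le_sup (f := fun q : ℤ × (Fin n → ℤ) => q.1.natAbs) hq
          simp only [DCE.Ic, Finset.mem_Icc]
          omega
        calc ∑ q ∈ s, (DCE.av φ q.1 q.2)^2 * μ (DCE.piece n q)
            = ∑ q ∈ s, (if q.1 ∈ DCE.Ic N then 1 else 0) *
                (DCE.av φ q.1 q.2)^2 * μ (DCE.piece n q) := by
              apply Finset.sum_congr rfl
              intro q hq
              rw [if_pos (hsub q hq), one_mul]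
          _ ≤ ∑' q : ℤ × (Fin n → ℤ), (if q.1 ∈ DCE.Ic N then 1 else 0) *
                (DCE.av φ q.1 q.2)^2 * μ (DCE.piece n q) := ENNReal.sum_le_tsum s
          _ ≤ 4 * ENNReal.ofReal C * ∫⁻ x, (φ x)^2 :=
              DCE.main_trunc φ hφ hF μ hCarl' N
end
end
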